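/- Let A be a real symmetric n×n matrix, B a real n×p matrix, and C a real symmetric p×p matrix. The block matrix Ã = [[A, B], [Bᵀ, C]] (with A and B in the top row and Bᵀ and C in the bottom row) is positive semidefinite if and only if A is positive semidefinite and there exists a real n×p matrix W such that B = A·W and C − Wᵀ·A·W is positive semidefinite. -/

import Mathlib

open Matrix

private lemma exists_mulVec_eq {n : ℕ} (A : Matrix (Fin n) (Fin n) ℝ) (hA : A.IsSymm)
    (b : Fin n → ℝ) (hb : ∀ v : Fin n → ℝ, A *ᵥ v = 0 → b ⬝ᵥ v = 0) :
    ∃ w : Fin n → ℝ, A *ᵥ w = b := by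
  classical
  set T : EuclideanSpace ℝ (Fin n) →ₗ[ℝ] EuclideanSpace ℝ (Fin n) := Matrix.toEuclideanLin A with hT
  have hinner : ∀ u v : EuclideanSpace ℝ (Fin n),
      (inner ℝ u v : ℝ) = (WithLp.equiv 2 _ u) ⬝ᵥ (WithLp.equiv 2 _ v) := by
    intro u v
    simp [PiLp.inner_apply, dotProduct, mul_comm]
  have hsymm : ∀ u v : EuclideanSpace ℝ (Fin n), (inner ℝ (T u) v : ℝ) = inner ℝ u (T v) := by
    intro u v
    rw [hinner, hinner]
    show (A *ᵥ (WithLp.equiv 2 _ u)) ⬝ᵥ (WithLp.equiv 2 _ v)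
      = (WithLp.equiv 2 _ u) ⬝ᵥ (A *ᵥ (WithLp.equiv 2 _ v))
    rw [dotProduct_mulVec, ← mulVec_transpose, hA]
  have hle : LinearMap.range T ≤ (LinearMap.ker T)ᗮ := by
    rintro _ ⟨u, rfl⟩
    rw [Submodule.mem_orthogonal]
    intro v hv
    rw [real_inner_comm, hsymm, LinearMap.mem_ker.mp hv, inner_zero_right]
  have hrange : LinearMap.range T = (LinearMap.ker T)ᗮ := by
    apply Submodule.eq_of_le_of_finrank_le hle
    have h1 := LinearMap.finrank_range_add_finrank_ker T
    have h2 := Submodule.finrank_add_finrank_orthogonal (K := LinearMap.ker T)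
    have h3 : Module.finrank ℝ (EuclideanSpace ℝ (Fin n)) = n := by simp
    omega
  have hbmem : (WithLp.equiv 2 (Fin n → ℝ)).symm b ∈ (LinearMap.ker T)ᗮ := by
    rw [Submodule.mem_orthogonal]
    intro v hv
    have hv0 : A *ᵥ (WithLp.equiv 2 _ v) = 0 :=
      congrArg (WithLp.equiv 2 _) (LinearMap.mem_ker.mp hv)
    have := hb _ hv0
    rw [hinner]
    simpa [dotProduct_comm] using this
  rw [← hrange] at hbmem
  obtain ⟨w, hw⟩ := hbmem
  exact ⟨WithLp.equiv 2 _ w, congrArg (WithLp.equiv 2 _) hw⟩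

private lemma dotProduct_self_nonneg' {k : ℕ} (v : Fin k → ℝ) : 0 ≤ v ⬝ᵥ v :=
  Finset.sum_nonneg fun i _ => mul_self_nonneg (v i)

/-- **Smul'jan's theorem (positivity part).** The block matrix
`[[A, B], [Bᵀ, C]]` is positive semidefinite iff `A` is positive semidefinite
and there exists `W` with `B = A * W` and `C - Wᵀ * A * W` positive semidefinite. -/
theorem block_posSemidef_iff (n p : ℕ)
    (A : Matrix (Fin n) (Fin n) ℝ) (B : Matrix (Fin n) (Fin p) ℝ)
    (C : Matrix (Fin p) (Fin p) ℝ) (hA : A.IsSymm) (hC : C.IsSymm) :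
    (Matrix.fromBlocks A B Bᵀ C).PosSemidef ↔
      (A.PosSemidef ∧ ∃ W : Matrix (Fin n) (Fin p) ℝ,
        B = A * W ∧ (C - Wᵀ * A * W).PosSemidef) := by
  have hsA : ∀ u v : Fin n → ℝ, u ⬝ᵥ A *ᵥ v = v ⬝ᵥ A *ᵥ u := by
    intro u v
    rw [dotProduct_mulVec, ← mulVec_transpose, hA, dotProduct_comm]
  have hAherm : A.IsHermitian := by
    rw [Matrix.IsHermitian, conjTranspose_eq_transpose_of_trivial, hA]
  have hherm : (Matrix.fromBlocks A B Bᵀ C).IsHermitian := by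
    rw [Matrix.IsHermitian, conjTranspose_eq_transpose_of_trivial, fromBlocks_transpose,
      transpose_transpose, hA, hC]
  have hquad : ∀ (x : Fin n → ℝ) (y : Fin p → ℝ),
      Sum.elim x y ⬝ᵥ (Matrix.fromBlocks A B Bᵀ C) *ᵥ Sum.elim x y
        = x ⬝ᵥ A *ᵥ x + x ⬝ᵥ B *ᵥ y + (y ⬝ᵥ Bᵀ *ᵥ x + y ⬝ᵥ C *ᵥ y) := by
    intro x y
    rw [fromBlocks_mulVec, sumElim_dotProduct_sumElim, dotProduct_add, dotProduct_add]
    simp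
  constructor
  · intro h
    have hApsd : A.PosSemidef := by
      refine .of_dotProduct_mulVec_nonneg hAherm fun x => ?_
      have h0 := h.dotProduct_mulVec_nonneg (Sum.elim x 0)
      rw [star_trivial, hquad] at h0
      simpa using h0
    have hker : ∀ v : Fin n → ℝ, A *ᵥ v = 0 → Bᵀ *ᵥ v = 0 := by
      intro v hv
      set y : Fin p → ℝ := Bᵀ *ᵥ v with hy
      set s : ℝ := y ⬝ᵥ y with hs
      set c : ℝ := y ⬝ᵥ C *ᵥ y with hc
      have key : ∀ t : ℝ, 0 ≤ 2 * t * s + c := by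
        intro t
        have h0 := h.dotProduct_mulVec_nonneg (Sum.elim (t • v) y)
        rw [star_trivial, hquad] at h0
        rw [mulVec_smul, hv, smul_zero, dotProduct_zero] at h0
        have e1 : (t • v) ⬝ᵥ B *ᵥ y = t * s := by
          rw [smul_dotProduct, dotProduct_mulVec, ← mulVec_transpose, ← hy, ← hs, smul_eq_mul]
        have e2 : y ⬝ᵥ Bᵀ *ᵥ (t • v) = t * s := by
          rw [mulVec_smul, dotProduct_smul, ← hy, smul_eq_mul, hs, dotProduct_comm]
        rw [e1, e2, ← hc] at h0
        linarith
      have hs0 : s = 0 := by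
        by_contra hne
        have hslt : 0 < s := lt_of_le_of_ne (dotProduct_self_nonneg' y) (Ne.symm hne)
        have h1 := key ((-c - 1) / (2 * s))
        have h2 : 2 * ((-c - 1) / (2 * s)) * s + c = -1 := by
          field_simp
          ring
        linarith
      exact dotProduct_self_eq_zero.mp hs0
    have hcol : ∀ j, ∃ w : Fin n → ℝ, A *ᵥ w = fun i => B i j := by
      intro j
      apply exists_mulVec_eq A hA
      intro v hv
      have h2 : (Bᵀ *ᵥ v) j = 0 := by rw [hker v hv]; rfl
      simpa [mulVec, dotProduct, mul_comm] using h2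
    choose w hw using hcol
    set W : Matrix (Fin n) (Fin p) ℝ := Matrix.of (fun i j => w j i) with hWdef
    have hB : B = A * W := by
      ext i j
      have := congrFun (hw j) i
      simpa [Matrix.mul_apply, mulVec, dotProduct, hWdef] using this.symm
    refine ⟨hApsd, W, hB, .of_dotProduct_mulVec_nonneg ?_ ?_⟩
    · rw [Matrix.IsHermitian, conjTranspose_eq_transpose_of_trivial, transpose_sub, hC,
        transpose_mul, transpose_mul, transpose_transpose, hA]
      rw [Matrix.mul_assoc]
    · intro y
      rw [star_trivial]
      have h0 := h.dotProduct_mulVec_nonneg (Sum.elim (-(W *ᵥ y)) y)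
      rw [star_trivial, hquad] at h0
      have e1 : (-(W *ᵥ y)) ⬝ᵥ A *ᵥ (-(W *ᵥ y)) = (W *ᵥ y) ⬝ᵥ A *ᵥ (W *ᵥ y) := by
        rw [mulVec_neg, neg_dotProduct, dotProduct_neg, neg_neg]
      have e2 : (-(W *ᵥ y)) ⬝ᵥ B *ᵥ y = -((W *ᵥ y) ⬝ᵥ A *ᵥ (W *ᵥ y)) := by
        rw [neg_dotProduct, hB, ← mulVec_mulVec]
      have e3 : y ⬝ᵥ Bᵀ *ᵥ (-(W *ᵥ y)) = -((W *ᵥ y) ⬝ᵥ A *ᵥ (W *ᵥ y)) := by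
        rw [mulVec_neg, dotProduct_neg, hB, transpose_mul, ← mulVec_mulVec,
          dotProduct_mulVec, ← mulVec_transpose, transpose_transpose, hA]
      rw [e1, e2, e3] at h0
      have hWAW : y ⬝ᵥ (Wᵀ * A * W) *ᵥ y = (W *ᵥ y) ⬝ᵥ A *ᵥ (W *ᵥ y) := by
        rw [← mulVec_mulVec, ← mulVec_mulVec, dotProduct_mulVec, ← mulVec_transpose,
          transpose_transpose]
      have e4 : y ⬝ᵥ (C - Wᵀ * A * W) *ᵥ y
          = y ⬝ᵥ C *ᵥ y - (W *ᵥ y) ⬝ᵥ A *ᵥ (W *ᵥ y) := by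
        rw [sub_mulVec, dotProduct_sub, hWAW]
      rw [e4]
      linarith
  · rintro ⟨hApsd, W, hB, hS⟩
    refine .of_dotProduct_mulVec_nonneg hherm fun z => ?_
    rw [star_trivial, ← Sum.elim_comp_inl_inr z, hquad]
    set x : Fin n → ℝ := z ∘ Sum.inl
    set y : Fin p → ℝ := z ∘ Sum.inr
    have h1 := hApsd.dotProduct_mulVec_nonneg (x + W *ᵥ y)
    rw [star_trivial] at h1
    have h2 := hS.dotProduct_mulVec_nonneg y
    rw [star_trivial] at h2
    have hexp : (x + W *ᵥ y) ⬝ᵥ A *ᵥ (x + W *ᵥ y)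
        = x ⬝ᵥ A *ᵥ x + 2 * (x ⬝ᵥ A *ᵥ (W *ᵥ y)) + (W *ᵥ y) ⬝ᵥ A *ᵥ (W *ᵥ y) := by
      rw [mulVec_add, dotProduct_add, add_dotProduct, add_dotProduct, hsA (W *ᵥ y) x]
      ring
    have e1 : x ⬝ᵥ B *ᵥ y = x ⬝ᵥ A *ᵥ (W *ᵥ y) := by
      rw [hB, ← mulVec_mulVec]
    have e2 : y ⬝ᵥ Bᵀ *ᵥ x = x ⬝ᵥ A *ᵥ (W *ᵥ y) := by
      rw [hB, transpose_mul, hA, ← mulVec_mulVec, dotProduct_mulVec, ← mulVec_transpose,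
        transpose_transpose, hsA]
    have hWAW : y ⬝ᵥ (Wᵀ * A * W) *ᵥ y = (W *ᵥ y) ⬝ᵥ A *ᵥ (W *ᵥ y) := by
      rw [← mulVec_mulVec, ← mulVec_mulVec, dotProduct_mulVec, ← mulVec_transpose,
        transpose_transpose]
    have e3 : y ⬝ᵥ (C - Wᵀ * A * W) *ᵥ y
        = y ⬝ᵥ C *ᵥ y - (W *ᵥ y) ⬝ᵥ A *ᵥ (W *ᵥ y) := by
      rw [sub_mulVec, dotProduct_sub, hWAW]
    rw [e1, e2]
    rw [e3] at h2
    rw [hexp] at h1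
    linarith
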